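/- Let m ≥ 1, let X be a type, let φ : X → X be a bijection, let A ⊆ X be a subset, let p_A : Aᶜ → X_A and p' : (φ(A))ᶜ → X'_A be maps, and let φ' : X_A → X'_A be a map satisfying φ'(p_A(w)) = p'(φ(w)) for all w ∈ X with w ∉ A. Then the image of the correspondence L(A, p_A) ⊆ Sym X m × Sym X_A (m-1) under the product map Sym.map φ × Sym.map φ' equals the correspondence L(φ(A), p') ⊆ Sym X m × Sym X'_A (m-1). -/

import Mathlib

/-- The set-level handle-attachment correspondence: pairs
`(⟦x₁, …, x_m⟧, ⟦p_A x₂, …, p_A x_m⟧)` with `x₁ ∈ A` and `x_i ∉ A` for `i ≥ 2`. -/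

private theorem Multiset.pmap_map' {α β γ : Type*} {p : β → Prop} (g : ∀ b, p b → γ)
    (f : α → β) (s : Multiset α) (H : ∀ b ∈ s.map f, p b) :
    (s.map f).pmap g H =
      s.pmap (fun a h => g (f a) h) (fun b hb => H _ (Multiset.mem_map_of_mem f hb)) := by
  induction s using Multiset.induction_on with
  | empty => simp
  | cons a s ih => simp [ih]

def HandleCorr {X XA : Type*} (A : Set X) (pA : (Aᶜ : Set X) → XA) (m : ℕ) :
    Set (Sym X m × Sym XA (m - 1)) :=
  { yx | ∃ (a : X) (_ : a ∈ A) (s : Multiset X) (hs : ∀ w ∈ s, w ∈ Aᶜ),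
      (yx.1 : Multiset X) = a ::ₘ s ∧
      (yx.2 : Multiset XA) = s.pmap (fun w hw => pA ⟨w, hw⟩) hs }

/-- equivariance of the handle-attachment correspondences.  For a bijection
`φ : X → X` and maps `p_A : Aᶜ → X_A`, `p' : (φ(A))ᶜ → X'_A` intertwined by
`φ' : X_A → X'_A` (i.e. `φ'(p_A w) = p'(φ w)` for `w ∉ A`), the image of `L(A, p_A)` under
`Sym.map φ × Sym.map φ'` equals `L(φ(A), p')`. -/
theorem handleCorr_equivariance {X XA X'A : Type*} {m : ℕ} (hm : 1 ≤ m)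
    (φ : X → X) (hφ : Function.Bijective φ)
    {A : Set X} (pA : (Aᶜ : Set X) → XA) (p' : ((φ '' A)ᶜ : Set X) → X'A)
    (φ' : XA → X'A)
    (hcomm : ∀ (w : X) (hw : w ∈ Aᶜ) (hw' : φ w ∈ (φ '' A)ᶜ),
        φ' (pA ⟨w, hw⟩) = p' ⟨φ w, hw'⟩) :
    Prod.map (Sym.map φ) (Sym.map φ') '' HandleCorr A pA m =
      HandleCorr (φ '' A) p' m := by
  ext ⟨y, x⟩
  constructor
  · rintro ⟨⟨y0, x0⟩, ⟨a, ha, s, hs, hy0, hx0⟩, h⟩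
    obtain ⟨h1, h2⟩ := Prod.mk.injEq .. ▸ h
    have hs' : ∀ w ∈ s.map φ, w ∈ (φ '' A)ᶜ := by
      rintro w hw ⟨b, hb, hb'⟩
      obtain ⟨u, hu, rfl⟩ := Multiset.mem_map.1 hw
      exact hs u hu (hφ.1 hb' ▸ hb)
    refine ⟨φ a, ⟨a, ha, rfl⟩, s.map φ, hs', ?_, ?_⟩
    · rw [← h1, Sym.coe_map, hy0, Multiset.map_cons]
    · rw [← h2, Sym.coe_map, hx0, Multiset.map_pmap, Multiset.pmap_map']
      exact Multiset.pmap_congr s fun w hw h1 h2 => hcomm w h1 _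
  · rintro ⟨a', ha', s', hs', hy, hx⟩
    obtain ⟨a, ha, rfl⟩ := ha'
    replace hy : (y : Multiset X) = φ a ::ₘ s' := hy
    replace hx : (x : Multiset X'A) = Multiset.pmap (fun w hw => p' ⟨w, hw⟩) s' hs' := hx
    obtain ⟨s, rfl⟩ : ∃ s : Multiset X, s.map φ = s' :=
      ⟨s'.map (Function.surjInv hφ.2), by
        rw [Multiset.map_map]; simp [Function.comp, Function.surjInv_eq hφ.2]⟩
    have hs : ∀ w ∈ s, w ∈ Aᶜ := fun w hw hwA =>
      hs' (φ w) (Multiset.mem_map_of_mem φ hw) ⟨w, hwA, rfl⟩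
    have hcard : Multiset.card s = m - 1 := by
      have h2 : Multiset.card (y : Multiset X) = m := y.2
      have h := congrArg Multiset.card hy
      rw [Multiset.card_cons, Multiset.card_map] at h
      omega
    have hcards : Multiset.card (a ::ₘ s) = m := by
      rw [Multiset.card_cons, hcard]; omega
    refine ⟨(⟨a ::ₘ s, hcards⟩, ⟨s.pmap (fun w hw => pA ⟨w, hw⟩) hs, by
        rw [Multiset.card_pmap, hcard]⟩),
      ⟨a, ha, s, hs, rfl, rfl⟩, ?_⟩
    have e1 : Sym.map φ (⟨a ::ₘ s, hcards⟩ : Sym X m) = y := by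
      apply Sym.coe_injective
      rw [hy]
      show Multiset.map φ (a ::ₘ s) = _
      rw [Multiset.map_cons]
    have e2 : Sym.map φ' (⟨s.pmap (fun w hw => pA ⟨w, hw⟩) hs, by
        rw [Multiset.card_pmap, hcard]⟩ : Sym XA (m - 1)) = x := by
      apply Sym.coe_injective
      rw [hx]
      show Multiset.map φ' (s.pmap (fun w hw => pA ⟨w, hw⟩) hs) = _
      rw [Multiset.map_pmap, Multiset.pmap_map']
      exact Multiset.pmap_congr s fun w hw h1 h2 => hcomm w h1 _
    simp [Prod.map, e1, e2]
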